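/- Let S be a semigroup satisfying the identity x·y·z·x·y = x·y for all x, y, z ∈ S, and suppose that for all x, y, z, u, w ∈ S, x·y·z = x·y·w·z or x·y·z = x·u·y·z. Then for all x, z, v, w ∈ S, z·x = z·z·x or v·z·w·x = v·z·x. -/
import Mathlib


theorem stmt_7 {S : Type*} [Semigroup S]
    (hGRB : ∀ x y z : S, x * y * z * x * y = x * y)
    (hI : ∀ x y z u w : S, x * y * z = x * y * w * z ∨ x * y * z = x * u * y * z) :
    ∀ x z v w : S, z * x = z * z * x ∨ v * z * w * x = v * z * x := by
  intro x z v w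
  -- Fact F : v*z*z*w*x = v*z*w*x
  have hF : v * (z * (z * (w * x))) = v * (z * (w * x)) := by
    rcases hI (v*z) z (w*x) (x*(z*v)) (x*(z*(v*z))) with h | h
    · have h2 := congrArg (· * (w*x)) (hGRB v z (z*(x*z)))
      simp only [mul_assoc] at h h2 ⊢
      rw [h, h2]
    · have h2 := congrArg (· * (w*x)) (hGRB v z (x*z))
      simp only [mul_assoc] at h h2 ⊢
      rw [h, h2]
  rcases hI z z x (x*z) w with hD | hP
  · -- hD : z*z*x = z*z*w*x
    rcases hI v z x z w with hQ | hA
    · exact Or.inr hQ.symm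
    · -- hA : v*z*x = v*z*z*x
      right
      have h3 := congrArg (v * ·) hD
      simp only [mul_assoc] at hA h3 hF ⊢
      rw [hA, h3, hF]
  · -- hP : z*z*x = z*(x*z)*z*x
    left
    have h4 := hGRB z x z
    simp only [mul_assoc] at hP h4 ⊢
    rw [hP, h4]
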